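/- Let k be a field of characteristic zero with algebraic closure k̄, let A be a complete local k̄-algebra, let G be a finite group acting on A by k̄-algebra automorphisms, and let y ∈ A be an element generating a G-invariant ideal, with y not a zero divisor. Then the element y' = |G|^{-1} · Σ_{σ∈G} c_σ · σ(y), where c_σ ∈ k̄ is the residue (image in the residue field) of y/σ(y), generates the same ideal as y, and G acts on the line spanned by y' by a character, i.e., for each σ ∈ G there is λ_σ ∈ k̄ with σ(y') = λ_σ · y'. -/
import Mathlib


open IsLocalRing

/-- Let `k̄` be an algebraically closed field of characteristic zero, `A` a
complete (Noetherian) local `k̄`-algebra with residue field `k̄`, `G` a finite group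
acting on `A` by `k̄`-algebra automorphisms, and `y ∈ A` a nonzerodivisor generating a
`G`-invariant ideal.  For `σ ∈ G` let `c σ ∈ k̄` be the residue of the unit `y/σ(y)`
(so `y = u_σ · σ(y)` with `u_σ ≡ c σ mod m`).  Then
`y' = |G|⁻¹ · Σ_σ c_σ · σ(y)` generates the same ideal as `y`, and `G` acts on the line
spanned by `y'` by a character: for each `σ` there is `λ_σ ∈ k̄` with
`σ(y') = λ_σ · y'`. -/
theorem statement0 {kbar : Type*} [Field kbar] [IsAlgClosed kbar] [CharZero kbar]
    {A : Type*} [CommRing A] [IsNoetherianRing A] [IsLocalRing A] [Algebra kbar A]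
    [IsAdicComplete (maximalIdeal A) A]
    (hres : Function.Bijective ((residue A).comp (algebraMap kbar A)))
    {G : Type*} [Group G] [Fintype G] [MulSemiringAction G A]
    (halg : ∀ (σ : G) (c : kbar), σ • (algebraMap kbar A c) = algebraMap kbar A c)
    (y : A) (hy : y ∈ nonZeroDivisors A)
    (hGy : ∀ σ : G, σ • y ∈ Ideal.span {y})
    (c : G → kbar)
    (hc : ∀ σ : G, ∃ u : Aˣ, y = (u : A) * (σ • y) ∧
      (u : A) - algebraMap kbar A (c σ) ∈ maximalIdeal A) :
    letI y' : A := algebraMap kbar A ((Fintype.card G : kbar)⁻¹) *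
      ∑ σ : G, algebraMap kbar A (c σ) * (σ • y)
    Ideal.span {y'} = Ideal.span {y} ∧
    ∀ σ : G, ∃ lam : kbar, σ • y' = algebraMap kbar A lam * y' := by
  classical
  set y' : A := algebraMap kbar A ((Fintype.card G : kbar)⁻¹) *
      ∑ σ : G, algebraMap kbar A (c σ) * (σ • y) with hy'def
  choose u hu1 hu2 using hc
  -- the action preserves the maximal ideal
  have hsm : ∀ (σ : G) (x : A), x ∈ maximalIdeal A → σ • x ∈ maximalIdeal A := by
    intro σ x hx
    rw [mem_maximalIdeal, mem_nonunits_iff] at hx ⊢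
    intro h
    exact hx (by simpa using h.map (MulSemiringAction.toRingHom G A σ⁻¹))
  -- residues agree mod m
  have hres_eq : ∀ x z : A, x - z ∈ maximalIdeal A → residue A x = residue A z := by
    intro x z h
    have : residue A (x - z) = 0 := Ideal.Quotient.eq_zero_iff_mem.mpr h
    rwa [map_sub, sub_eq_zero] at this
  have hru : ∀ σ : G, residue A ((u σ : A)) = residue A (algebraMap kbar A (c σ)) :=
    fun σ => hres_eq _ _ (hu2 σ)
  -- σ • y = (u σ)⁻¹ * y
  have hsy : ∀ σ : G, σ • y = ((u σ)⁻¹ : Aˣ) * y := by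
    intro σ
    have := hu1 σ
    calc σ • y = ((u σ)⁻¹ : Aˣ) * ((u σ : A) * (σ • y)) := by
          rw [← mul_assoc, Units.inv_mul, one_mul]
      _ = ((u σ)⁻¹ : Aˣ) * y := by rw [← this]
  have hsy_nzd : ∀ σ : G, σ • y ∈ nonZeroDivisors A := by
    intro σ
    rw [hsy σ]
    exact mul_mem ((u σ)⁻¹.isUnit.mem_nonZeroDivisors) hy
  -- multiplicativity of u
  have humul : ∀ σ τ : G, (u (σ * τ) : A) = (u σ : A) * σ • (u τ : A) := by
    intro σ τ
    have h1 : (u (σ * τ) : A) * ((σ * τ) • y) = ((u σ : A) * σ • (u τ : A)) * ((σ * τ) • y) := by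
      rw [← hu1 (σ * τ), mul_assoc, mul_smul, ← smul_mul', ← hu1 τ, ← hu1 σ]
    exact (mul_cancel_right_mem_nonZeroDivisors (hsy_nzd (σ * τ))).mp h1
  -- residue of σ • (u τ)
  have hrsu : ∀ σ τ : G, residue A (σ • (u τ : A)) = residue A (algebraMap kbar A (c τ)) := by
    intro σ τ
    refine hres_eq _ _ ?_
    have : σ • ((u τ : A) - algebraMap kbar A (c τ)) ∈ maximalIdeal A := hsm σ _ (hu2 τ)
    rwa [smul_sub, halg] at this
  have hfinj : Function.Injective (fun a : kbar => residue A (algebraMap kbar A a)) := hres.injective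
  -- c is multiplicative
  have hcmul : ∀ σ τ : G, c (σ * τ) = c σ * c τ := by
    intro σ τ
    apply hfinj
    show residue A (algebraMap kbar A (c (σ * τ))) = residue A (algebraMap kbar A (c σ * c τ))
    rw [← hru (σ * τ), humul σ τ, map_mul, hru σ, hrsu σ τ, map_mul, map_mul]
  have hc1 : c 1 = 1 := by
    apply hfinj
    show residue A (algebraMap kbar A (c 1)) = residue A (algebraMap kbar A 1)
    have hu1' : (u 1 : A) = 1 := by
      have : (u 1 : A) * y = 1 * y := by
        rw [one_mul]; have := hu1 1; rw [one_smul] at this; exact this.symm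
      exact (mul_cancel_right_mem_nonZeroDivisors hy).mp this
    rw [← hru 1, hu1']
    simp
  have hcne : ∀ σ : G, c σ ≠ 0 := by
    intro σ h
    have h0 : residue A (algebraMap kbar A (c σ)) = 0 := by rw [h, map_zero, map_zero]
    have : IsUnit (residue A ((u σ : A))) := (u σ).isUnit.map (residue A)
    rw [hru σ, h0] at this
    exact this.ne_zero rfl
  have hcinv : ∀ σ : G, c σ⁻¹ = (c σ)⁻¹ := by
    intro σ
    have h1 : c σ * c σ⁻¹ = 1 := by rw [← hcmul, mul_inv_cancel, hc1]
    exact eq_inv_of_mul_eq_one_left (by rw [mul_comm]; exact h1)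
  -- the unit w
  set w : A := algebraMap kbar A ((Fintype.card G : kbar)⁻¹) *
      ∑ σ : G, algebraMap kbar A (c σ) * ((u σ)⁻¹ : Aˣ) with hw
  have key : y' = w * y := by
    rw [hy'def, hw, mul_assoc, Finset.sum_mul]
    congr 1
    refine Finset.sum_congr rfl fun σ _ => ?_
    rw [hsy σ, mul_assoc]
  have hn : (Fintype.card G : kbar) ≠ 0 := Nat.cast_ne_zero.mpr Fintype.card_ne_zero
  have hrw : residue A w = 1 := by
    rw [hw, map_mul, map_sum]
    have hterm : ∀ σ : G, residue A (algebraMap kbar A (c σ) * ((u σ)⁻¹ : Aˣ)) = 1 := by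
      intro σ
      rw [map_mul, ← hru σ, ← map_mul, Units.mul_inv, map_one]
    rw [Finset.sum_congr rfl fun σ _ => hterm σ, Finset.sum_const, Finset.card_univ, nsmul_eq_mul,
      mul_one]
    have hcard : ((Fintype.card G : ResidueField A)) =
        residue A (algebraMap kbar A (Fintype.card G : kbar)) := by
      rw [map_natCast, map_natCast]
    rw [hcard, ← map_mul, ← map_mul, inv_mul_cancel₀ hn, map_one, map_one]
  have hwu : IsUnit w := by
    by_contra h
    have hm : w ∈ maximalIdeal A := (mem_maximalIdeal w).mpr h
    have : residue A w = 0 := Ideal.Quotient.eq_zero_iff_mem.mpr hm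
    rw [hrw] at this
    exact one_ne_zero this
  constructor
  · rw [key]
    exact Ideal.span_singleton_mul_left_unit hwu y
  · intro σ
    refine ⟨(c σ)⁻¹, ?_⟩
    rw [hy'def, smul_mul', halg, Finset.smul_sum]
    have hterm : ∀ τ : G, σ • (algebraMap kbar A (c τ) * (τ • y)) =
        algebraMap kbar A (c τ) * ((σ * τ) • y) := by
      intro τ
      rw [smul_mul', halg, mul_smul]
    rw [Finset.sum_congr rfl fun τ _ => hterm τ]
    have reindex : ∑ τ : G, algebraMap kbar A (c τ) * ((σ * τ) • y)
        = ∑ ρ : G, algebraMap kbar A (c (σ⁻¹ * ρ)) * (ρ • y) :=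
      Fintype.sum_equiv (Equiv.mulLeft σ) _ _ (fun τ => by
        simp [Equiv.mulLeft, inv_mul_cancel_left])
    rw [reindex]
    have hcc : ∀ ρ : G, c (σ⁻¹ * ρ) = (c σ)⁻¹ * c ρ := by
      intro ρ
      rw [hcmul, hcinv]
    rw [Finset.sum_congr rfl fun ρ _ => by rw [hcc ρ, map_mul, mul_assoc]]
    rw [← Finset.mul_sum]
    ring
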